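/- arXiv:2101.11258 — 2 statements merged into one kernel-verified Lean document; each statement's English description precedes it below -/
import Mathlib

section
/- Conservation of the collapse constraint: Let G : (0,∞) → ℝ be continuously differentiable and let (x_1,…,x_N) be a solution of the point-vortex system with kernel G on [0,T) with no collapse. Then the quantity C(t) = Σ_{i=1}^N Σ_{j≠i} a_i a_j |x_i(t) − x_j(t)|² is constant on [0,T). -/
open Filter MeasureTheory

noncomputable section

/-- The plane `ℝ²`. -/
abbrev Plane : Type := EuclideanSpace ℝ (Fin 2)

/-- Counterclockwise rotation by `π/2`: `(v₁, v₂)^⊥ = (−v₂, v₁)`. -/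
def perp (v : Plane) : Plane := WithLp.toLp 2 ![-v 1, v 0]

/-- `∇^⊥_y K(|y|) = K'(|y|) y^⊥ / |y|` for a radial kernel profile `K`. -/
def gradPerp (K : ℝ → ℝ) (y : Plane) : Plane := (deriv K ‖y‖ / ‖y‖) • perp y

/-- A solution of the point-vortex system with intensities `a`, kernel profile `G`,
on the time interval `[0, T)`, with no collapse. -/
def IsVortexSolution (N : ℕ) (a : Fin N → ℝ) (G : ℝ → ℝ) (T : ℝ)
    (x : Fin N → ℝ → Plane) : Prop :=
  (∀ t ∈ Set.Ico (0 : ℝ) T, ∀ i j : Fin N, i ≠ j → x i t ≠ x j t) ∧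
  ∀ i : Fin N, ∀ t ∈ Set.Ico (0 : ℝ) T,
    HasDerivWithinAt (x i)
      (∑ j ∈ Finset.univ.erase i, a j • gradPerp G (x i t - x j t))
      (Set.Ico 0 T) t

lemma perp_neg (v : Plane) : perp (-v) = - perp v := by
  ext i
  fin_cases i <;> simp [perp]

lemma gradPerp_neg (K : ℝ → ℝ) (y : Plane) : gradPerp K (-y) = - gradPerp K y := by
  simp [gradPerp, perp_neg, norm_neg, smul_neg]

lemma inner_perp_self (v : Plane) : (inner ℝ (perp v) v : ℝ) = 0 := by
  simp [perp, PiLp.inner_apply, Fin.sum_univ_two]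
  ring

lemma inner_gradPerp_self (K : ℝ → ℝ) (y : Plane) : (inner ℝ (gradPerp K y) y : ℝ) = 0 := by
  rw [gradPerp, real_inner_smul_left, inner_perp_self, mul_zero]

lemma sum_antisymm {E : Type*} [AddCommGroup E] [Module ℝ E] {N : ℕ}
    (F : Fin N → Fin N → E) (h : ∀ i j, F i j = - F j i) :
    ∑ i : Fin N, ∑ j ∈ Finset.univ.erase i, F i j = 0 := by
  have half : ∀ (v : E), v = -v → v = 0 := by
    intro v hv
    have h2 : (2 : ℝ) • v = 0 := by
      rw [two_smul]
      nth_rewrite 1 [hv]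
      abel
    have := smul_eq_zero.mp h2
    simpa using this
  have hdiag : ∀ i, F i i = 0 := fun i => half _ (h i i)
  have hfull : ∀ i : Fin N, ∑ j ∈ Finset.univ.erase i, F i j = ∑ j, F i j := by
    intro i
    rw [Finset.sum_erase_eq_sub (Finset.mem_univ i), hdiag, sub_zero]
  simp_rw [hfull]
  apply half
  have hc : ∑ i : Fin N, ∑ j, F j i = ∑ i : Fin N, ∑ j, F i j := Finset.sum_comm
  calc ∑ i : Fin N, ∑ j, F i j = ∑ i : Fin N, ∑ j, -F j i := by
        exact Finset.sum_congr rfl fun i _ => Finset.sum_congr rfl fun j _ => h i j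
    _ = -∑ i : Fin N, ∑ j, F j i := by simp
    _ = -∑ i : Fin N, ∑ j, F i j := by rw [hc]

lemma key_algebra {N : ℕ} (a : Fin N → ℝ) (G : ℝ → ℝ) (p q : Fin N → Plane)
    (hq : ∀ i, q i = ∑ k ∈ Finset.univ.erase i, a k • gradPerp G (p i - p k)) :
    ∑ i : Fin N, ∑ j ∈ Finset.univ.erase i,
      a i * a j * ((inner ℝ (p i - p j) (q i - q j) : ℝ) + (inner ℝ (q i - q j) (p i - p j) : ℝ)) = 0 := by
  have claim1 : ∑ i : Fin N, a i • q i = 0 := by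
    have h1 : ∀ i : Fin N, a i • q i
        = ∑ k ∈ Finset.univ.erase i, (a i * a k) • gradPerp G (p i - p k) := by
      intro i
      rw [hq i, Finset.smul_sum]
      exact Finset.sum_congr rfl fun k _ => smul_smul (a i) (a k) _
    rw [Finset.sum_congr rfl fun i _ => h1 i]
    apply sum_antisymm
    intro i k
    rw [show p k - p i = -(p i - p k) by abel, gradPerp_neg, smul_neg, mul_comm, neg_neg]
  have claim2 : ∑ i : Fin N, a i * (inner ℝ (q i) (p i) : ℝ) = 0 := by
    have h2 : ∀ i : Fin N, a i * (inner ℝ (q i) (p i) : ℝ)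
        = ∑ k ∈ Finset.univ.erase i,
            (a i * a k) * (inner ℝ (gradPerp G (p i - p k)) (p i) : ℝ) := by
      intro i
      rw [hq i, sum_inner, Finset.mul_sum]
      refine Finset.sum_congr rfl fun k _ => ?_
      rw [real_inner_smul_left]
      ring
    rw [Finset.sum_congr rfl fun i _ => h2 i]
    apply sum_antisymm
    intro i k
    have h0 : (inner ℝ (gradPerp G (p i - p k)) (p i - p k) : ℝ) = 0 := inner_gradPerp_self _ _
    rw [inner_sub_right] at h0
    have hgk : (inner ℝ (gradPerp G (p k - p i)) (p k) : ℝ)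
        = - (inner ℝ (gradPerp G (p i - p k)) (p k) : ℝ) := by
      rw [show p k - p i = -(p i - p k) by abel, gradPerp_neg, inner_neg_left]
    rw [hgk]
    linear_combination (a i * a k) * h0
  have hext : ∀ i : Fin N,
      ∑ j ∈ Finset.univ.erase i,
        a i * a j * ((inner ℝ (p i - p j) (q i - q j) : ℝ) + (inner ℝ (q i - q j) (p i - p j) : ℝ))
      = ∑ j : Fin N,
        a i * a j * ((inner ℝ (p i - p j) (q i - q j) : ℝ) + (inner ℝ (q i - q j) (p i - p j) : ℝ)) := by
    intro i
    rw [Finset.sum_erase_eq_sub (Finset.mem_univ i)]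
    simp
  simp_rw [hext]
  have e1 : ∀ i j : Fin N,
      a i * a j * ((inner ℝ (p i - p j) (q i - q j) : ℝ) + (inner ℝ (q i - q j) (p i - p j) : ℝ))
      = 2 * ((a i * (inner ℝ (q i) (p i) : ℝ)) * a j) + 2 * (a i * (a j * (inner ℝ (q j) (p j) : ℝ)))
        - 2 * (inner ℝ (a i • q i) (a j • p j) : ℝ) - 2 * (inner ℝ (a j • q j) (a i • p i) : ℝ) := by
    intro i j
    simp only [inner_sub_left, inner_sub_right, real_inner_smul_left, real_inner_smul_right,
      real_inner_comm (p i) (q i), real_inner_comm (p j) (q j),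
      real_inner_comm (p i) (q j), real_inner_comm (p j) (q i)]
    ring
  simp_rw [e1]
  simp only [Finset.sum_sub_distrib, Finset.sum_add_distrib]
  have t1 : ∑ i : Fin N, ∑ j : Fin N, 2 * ((a i * (inner ℝ (q i) (p i) : ℝ)) * a j) = 0 := by
    simp_rw [← Finset.mul_sum, ← Finset.sum_mul]
    rw [claim2, zero_mul, mul_zero]
  have t2 : ∑ i : Fin N, ∑ j : Fin N, 2 * (a i * (a j * (inner ℝ (q j) (p j) : ℝ))) = 0 := by
    simp_rw [← Finset.mul_sum]
    rw [claim2]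
    simp
  have t3 : ∑ i : Fin N, ∑ j : Fin N, 2 * (inner ℝ (a i • q i) (a j • p j) : ℝ) = 0 := by
    simp only [← Finset.mul_sum, ← inner_sum, ← sum_inner, claim1, inner_zero_left, mul_zero]
  have t4 : ∑ i : Fin N, ∑ j : Fin N, 2 * (inner ℝ (a j • q j) (a i • p i) : ℝ) = 0 := by
    simp only [← Finset.mul_sum, ← sum_inner, claim1, inner_zero_left, mul_zero,
      Finset.sum_const_zero]
  rw [t1, t2, t3, t4]
  norm_num

/-- Conservation of the collapse constraint
`C(t) = Σ_i Σ_{j≠i} a_i a_j |x_i(t) − x_j(t)|²` along a collapse-free solution of the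
point-vortex system with a kernel `G` that is `C¹` on `(0, ∞)`. -/
theorem collapse_constraint_conservation
    (N : ℕ) (a : Fin N → ℝ) (ha : ∀ i, a i ≠ 0)
    (G : ℝ → ℝ) (hG : ContDiffOn ℝ 1 G (Set.Ioi 0))
    (T : ℝ) (x : Fin N → ℝ → Plane)
    (hsol : IsVortexSolution N a G T x) :
    ∀ t ∈ Set.Ico (0 : ℝ) T,
      (∑ i : Fin N, ∑ j ∈ Finset.univ.erase i, a i * a j * ‖x i t - x j t‖ ^ 2) =
      (∑ i : Fin N, ∑ j ∈ Finset.univ.erase i, a i * a j * ‖x i 0 - x j 0‖ ^ 2) := by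
  intro t ht
  set s : Set ℝ := Set.Ico (0 : ℝ) T with hs
  have h0 : (0 : ℝ) ∈ s := ⟨le_refl 0, lt_of_le_of_lt ht.1 ht.2⟩
  set C : ℝ → ℝ := fun u => ∑ i : Fin N, ∑ j ∈ Finset.univ.erase i,
      a i * a j * (inner ℝ (x i u - x j u) (x i u - x j u) : ℝ) with hCdef
  have hderiv : ∀ u ∈ s, HasDerivWithinAt C 0 s u := by
    intro u hu
    set q : Fin N → Plane := fun i =>
      ∑ j ∈ Finset.univ.erase i, a j • gradPerp G (x i u - x j u) with hqdef
    have hx : ∀ i : Fin N, HasDerivWithinAt (x i) (q i) s u := fun i => hsol.2 i u hu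
    have hterm : ∀ i j : Fin N, HasDerivWithinAt
        (fun t => a i * a j * (inner ℝ (x i t - x j t) (x i t - x j t) : ℝ))
        (a i * a j * ((inner ℝ (x i u - x j u) (q i - q j) : ℝ)
          + (inner ℝ (q i - q j) (x i u - x j u) : ℝ))) s u := by
      intro i j
      exact (HasDerivWithinAt.inner ℝ ((hx i).sub (hx j)) ((hx i).sub (hx j))).const_mul _
    have hsum : HasDerivWithinAt C
        (∑ i : Fin N, ∑ j ∈ Finset.univ.erase i,
          a i * a j * ((inner ℝ (x i u - x j u) (q i - q j) : ℝ)
            + (inner ℝ (q i - q j) (x i u - x j u) : ℝ))) s u :=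
      HasDerivWithinAt.fun_sum fun i _ => HasDerivWithinAt.fun_sum fun j _ => hterm i j
    have hzero := key_algebra a G (fun i => x i u) q (fun i => rfl)
    rwa [hzero] at hsum
  have key := Convex.norm_image_sub_le_of_norm_hasDerivWithin_le (f' := fun _ => (0 : ℝ)) (C := 0)
    hderiv (fun y _ => by simp) (convex_Ico 0 T) h0 ht
  rw [zero_mul] at key
  have hC0 : C t = C 0 := sub_eq_zero.mp (norm_le_zero_iff.mp key)
  have hCnorm : ∀ u : ℝ, (∑ i : Fin N, ∑ j ∈ Finset.univ.erase i,
      a i * a j * ‖x i u - x j u‖ ^ 2) = C u := by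
    intro u
    exact Finset.sum_congr rfl fun i _ => Finset.sum_congr rfl fun j _ => by
      rw [real_inner_self_eq_norm_sq]
  rw [hCnorm t, hCnorm 0, hC0]
end
end

section
/- Uniform bound on the trajectories: Fix an integer N ≥ 1, intensities a_1,…,a_N ∈ ℝ∖{0} satisfying the non-neutral cluster hypothesis, a final time T > 0, and a constant M ≥ 0. Then there exists a constant C > 0, depending only on N, the intensities a_i, T and M, such that for every kernel profile G : (0,∞) → ℝ that is differentiable with locally Lipschitz derivative on (0,∞), whose derivative is Lipschitz on [1,∞), and with sup_{r≥1} |G'(r)| ≤ M, and for every solution (x_1,…,x_N) of the point-vortex system with kernel G on [0,T) with no collapse, one has sup_{t∈[0,T)} max_{1≤i≤N} |x_i(t) − x_i(0)| ≤ C. In particular C does not depend on the initial positions nor on the behavior of G near 0. -/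
open Filter MeasureTheory

noncomputable section

/-- The kernel regularity used in the paper: `G ∈ C^{1,1}_loc((0,∞)) ∩ C^{1,1}([1,∞))`,
i.e. `G` is differentiable on `(0,∞)`, with locally Lipschitz derivative there,
and with Lipschitz derivative on `[1,∞)`. -/
def KernelRegular (G : ℝ → ℝ) : Prop :=
  DifferentiableOn ℝ G (Set.Ioi 0) ∧
  (∀ s : Set ℝ, IsCompact s → s ⊆ Set.Ioi 0 → ∃ L : NNReal, LipschitzOnWith L (deriv G) s) ∧
  (∃ L : NNReal, LipschitzOnWith L (deriv G) (Set.Ici 1))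

lemma norm_perp (v : Plane) : ‖perp v‖ = ‖v‖ := by
  simp [EuclideanSpace.norm_eq, perp, Fin.sum_univ_two]
  ring_nf

lemma norm_gradPerp_le {K : ℝ → ℝ} {M : ℝ} (hM : ∀ r : ℝ, 1 ≤ r → |deriv K r| ≤ M)
    {y : Plane} (hy : 1 ≤ ‖y‖) : ‖gradPerp K y‖ ≤ M := by
  have h0 : (0:ℝ) < ‖y‖ := lt_of_lt_of_le one_pos hy
  have : ‖gradPerp K y‖ = |deriv K ‖y‖ / ‖y‖| * ‖y‖ := by
    rw [gradPerp, norm_smul, norm_perp]; rfl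
  rw [this, abs_div, abs_of_pos h0, div_mul_cancel₀ _ (ne_of_gt h0)]
  exact hM _ hy

lemma sum_antisymm_s4 {E : Type*} [AddCommGroup E] [Module ℝ E] {ι : Type*} [DecidableEq ι]
    (S : Finset ι) (f : ι → ι → E) (hf : ∀ i j, f j i = - f i j) :
    ∑ i ∈ S, ∑ j ∈ S.erase i, f i j = 0 := by
  have h1 : ∑ i ∈ S, ∑ j ∈ S.erase i, f i j = ∑ j ∈ S, ∑ i ∈ S.erase j, f i j := by
    apply Finset.sum_comm'
    intro i j
    simp only [Finset.mem_erase]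
    tauto
  have h2 : ∑ j ∈ S, ∑ i ∈ S.erase j, f i j = - ∑ j ∈ S, ∑ i ∈ S.erase j, f j i := by
    rw [← Finset.sum_neg_distrib]
    refine Finset.sum_congr rfl fun j _ => ?_
    rw [← Finset.sum_neg_distrib]
    exact Finset.sum_congr rfl fun i _ => hf j i
  have h3 : ∑ i ∈ S, ∑ j ∈ S.erase i, f i j = - ∑ i ∈ S, ∑ j ∈ S.erase i, f i j :=
    h1.trans h2
  have h4 : (2:ℝ) • ∑ i ∈ S, ∑ j ∈ S.erase i, f i j = 0 := by
    rw [two_smul]; nth_rewrite 2 [h3]; simp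
  simpa using smul_eq_zero.mp h4

lemma center_drift (N : ℕ) (a : Fin N → ℝ) (G : ℝ → ℝ) (T M : ℝ)
    (hGM : ∀ r : ℝ, 1 ≤ r → |deriv G r| ≤ M)
    (x : Fin N → ℝ → Plane) (hx : IsVortexSolution N a G T x)
    (S : Finset (Fin N)) (s u : ℝ) (hs : 0 ≤ s) (hsu : s ≤ u) (huT : u < T)
    (hsep : ∀ t ∈ Set.Icc s u, ∀ i ∈ S, ∀ j, j ∉ S → 1 ≤ ‖x i t - x j t‖) :
    ‖(∑ i ∈ S, a i • x i u) - (∑ i ∈ S, a i • x i s)‖ ≤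
      ((∑ i, |a i|) * ((∑ i, |a i|) * M)) * (u - s) := by
  set A := ∑ i, |a i| with hA
  have hIsub : Set.Icc s u ⊆ Set.Ico 0 T := fun t ht => ⟨le_trans hs ht.1, lt_of_le_of_lt ht.2 huT⟩
  set f' : ℝ → Plane := fun t => ∑ i ∈ S, ∑ j ∈ Finset.univ \ S, (a i * a j) • gradPerp G (x i t - x j t) with hf'
  have hderiv : ∀ t ∈ Set.Icc s u,
      HasDerivWithinAt (fun t => ∑ i ∈ S, a i • x i t) (f' t) (Set.Icc s u) t := by
    intro t ht
    have h1 : HasDerivWithinAt (fun t => ∑ i ∈ S, a i • x i t)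
        (∑ i ∈ S, a i • (∑ j ∈ Finset.univ.erase i, a j • gradPerp G (x i t - x j t)))
        (Set.Icc s u) t :=
      HasDerivWithinAt.fun_sum (fun i _ => ((hx.2 i t (hIsub ht)).mono hIsub).const_smul (a i))
    have heq : (∑ i ∈ S, a i • (∑ j ∈ Finset.univ.erase i, a j • gradPerp G (x i t - x j t))) = f' t := by
      have hsplit : ∀ i ∈ S, Finset.univ.erase i = (S.erase i) ∪ (Finset.univ \ S) := by
        intro i hi
        ext j
        simp only [Finset.mem_erase, Finset.mem_union, Finset.mem_sdiff, Finset.mem_univ,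
          true_and, and_true]
        constructor
        · intro hj
          by_cases hjS : j ∈ S
          · exact Or.inl ⟨hj, hjS⟩
          · exact Or.inr hjS
        · rintro (⟨hj, _⟩ | hj)
          · exact hj
          · intro h; exact hj (h ▸ hi)
      calc ∑ i ∈ S, a i • (∑ j ∈ Finset.univ.erase i, a j • gradPerp G (x i t - x j t))
          = ∑ i ∈ S, ∑ j ∈ Finset.univ.erase i, (a i * a j) • gradPerp G (x i t - x j t) := by
            refine Finset.sum_congr rfl fun i _ => ?_
            rw [Finset.smul_sum]
            exact Finset.sum_congr rfl fun j _ => (smul_smul (a i) (a j) _)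
        _ = ∑ i ∈ S, ((∑ j ∈ S.erase i, (a i * a j) • gradPerp G (x i t - x j t)) +
              ∑ j ∈ Finset.univ \ S, (a i * a j) • gradPerp G (x i t - x j t)) := by
            refine Finset.sum_congr rfl fun i hi => ?_
            rw [hsplit i hi, Finset.sum_union]
            exact Finset.disjoint_left.mpr fun j hj hj' =>
              (Finset.mem_sdiff.mp hj').2 (Finset.mem_of_mem_erase hj)
        _ = (∑ i ∈ S, ∑ j ∈ S.erase i, (a i * a j) • gradPerp G (x i t - x j t)) + f' t := by
            rw [Finset.sum_add_distrib]
        _ = f' t := by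
            rw [sum_antisymm_s4 S (fun i j => (a i * a j) • gradPerp G (x i t - x j t)), zero_add]
            intro i j
            have : x j t - x i t = -(x i t - x j t) := by abel
            rw [this, gradPerp_neg, mul_comm (a j) (a i), smul_neg]
    rw [heq] at h1
    exact h1
  have hbound : ∀ t ∈ Set.Icc s u, ‖f' t‖ ≤ A * (A * M) := by
    intro t ht
    have hM0 : 0 ≤ M := le_trans (abs_nonneg _) (hGM 1 le_rfl)
    calc ‖f' t‖ ≤ ∑ i ∈ S, ‖∑ j ∈ Finset.univ \ S, (a i * a j) • gradPerp G (x i t - x j t)‖ :=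
          norm_sum_le _ _
      _ ≤ ∑ i ∈ S, ∑ j ∈ Finset.univ \ S, |a i| * (|a j| * M) := by
          refine Finset.sum_le_sum fun i hi => ?_
          refine le_trans (norm_sum_le _ _) (Finset.sum_le_sum fun j hj => ?_)
          rw [norm_smul, Real.norm_eq_abs, abs_mul, mul_assoc]
          refine mul_le_mul_of_nonneg_left (mul_le_mul_of_nonneg_left ?_ (abs_nonneg _)) (abs_nonneg _)
          exact norm_gradPerp_le hGM (hsep t ht i hi j (Finset.mem_sdiff.mp hj).2)
      _ = ∑ i ∈ S, |a i| * ((∑ j ∈ Finset.univ \ S, |a j|) * M) := by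
          refine Finset.sum_congr rfl fun i _ => ?_
          rw [← Finset.mul_sum, ← Finset.sum_mul]
      _ = (∑ i ∈ S, |a i|) * ((∑ j ∈ Finset.univ \ S, |a j|) * M) := by
          rw [← Finset.sum_mul]
      _ ≤ A * (A * M) := by
          have h1 : (∑ i ∈ S, |a i|) ≤ A :=
            Finset.sum_le_sum_of_subset_of_nonneg (Finset.subset_univ S) (fun i _ _ => abs_nonneg _)
          have h2 : (∑ j ∈ Finset.univ \ S, |a j|) ≤ A :=
            Finset.sum_le_sum_of_subset_of_nonneg (Finset.subset_univ _) (fun i _ _ => abs_nonneg _)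
          have hS0 : 0 ≤ ∑ i ∈ S, |a i| := Finset.sum_nonneg fun i _ => abs_nonneg _
          have hA0 : 0 ≤ A := le_trans hS0 h1
          have h20 : 0 ≤ ∑ j ∈ Finset.univ \ S, |a j| := Finset.sum_nonneg fun i _ => abs_nonneg _
          exact mul_le_mul h1 (mul_le_mul_of_nonneg_right h2 hM0) (mul_nonneg h20 hM0) hA0
  have := Convex.norm_image_sub_le_of_norm_hasDerivWithin_le hderiv hbound (convex_Icc s u)
    (Set.left_mem_Icc.mpr hsu) (Set.right_mem_Icc.mpr hsu)
  calc ‖(∑ i ∈ S, a i • x i u) - (∑ i ∈ S, a i • x i s)‖ ≤ A * (A * M) * ‖u - s‖ := this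
    _ = A * (A * M) * (u - s) := by rw [Real.norm_eq_abs, abs_of_nonneg (by linarith)]

lemma spread_bound {N : ℕ} (a : Fin N → ℝ) (S : Finset (Fin N)) (p : Fin N → Plane)
    {i : Fin N} (hi : i ∈ S) {RS m : ℝ} (hm : 0 < m) (hmσ : m ≤ |∑ j ∈ S, a j|)
    (hdist : ∀ j ∈ S, ‖p i - p j‖ ≤ RS) :
    ‖p i - (∑ j ∈ S, a j)⁻¹ • ∑ j ∈ S, a j • p j‖ ≤ (∑ j, |a j|) / m * RS := by
  set σ := ∑ j ∈ S, a j with hσ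
  have hσ0 : σ ≠ 0 := by
    intro h; rw [h] at hmσ; simp at hmσ; linarith
  have hkey : p i - σ⁻¹ • ∑ j ∈ S, a j • p j = σ⁻¹ • ∑ j ∈ S, a j • (p i - p j) := by
    have h1 : ∑ j ∈ S, a j • (p i - p j) = σ • p i - ∑ j ∈ S, a j • p j := by
      rw [Finset.sum_congr rfl (fun j _ => smul_sub (a j) (p i) (p j)), Finset.sum_sub_distrib,
        ← Finset.sum_smul]
    rw [h1, smul_sub, smul_smul, inv_mul_cancel₀ hσ0, one_smul]
  rw [hkey]
  have hRS0 : 0 ≤ RS := le_trans (norm_nonneg (p i - p i)) (hdist i hi)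
  have h2 : ‖∑ j ∈ S, a j • (p i - p j)‖ ≤ (∑ j, |a j|) * RS := by
    refine le_trans (norm_sum_le _ _) ?_
    calc ∑ j ∈ S, ‖a j • (p i - p j)‖ ≤ ∑ j ∈ S, |a j| * RS := by
          refine Finset.sum_le_sum fun j hj => ?_
          rw [norm_smul, Real.norm_eq_abs]
          exact mul_le_mul_of_nonneg_left (hdist j hj) (abs_nonneg _)
      _ = (∑ j ∈ S, |a j|) * RS := by rw [Finset.sum_mul]
      _ ≤ (∑ j, |a j|) * RS := by
          refine mul_le_mul_of_nonneg_right ?_ hRS0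
          exact Finset.sum_le_sum_of_subset_of_nonneg (Finset.subset_univ S)
            (fun j _ _ => abs_nonneg _)
  rw [norm_smul, Real.norm_eq_abs, abs_inv, div_mul_eq_mul_div, div_eq_inv_mul, ← mul_assoc]
  calc |σ|⁻¹ * ‖∑ j ∈ S, a j • (p i - p j)‖ ≤ |σ|⁻¹ * ((∑ j, |a j|) * RS) := by
        refine mul_le_mul_of_nonneg_left h2 (inv_nonneg.mpr (abs_nonneg _))
    _ ≤ m⁻¹ * ((∑ j, |a j|) * RS) := by
        refine mul_le_mul_of_nonneg_right ?_ (mul_nonneg (Finset.sum_nonneg fun j _ => abs_nonneg _) hRS0)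
        exact inv_anti₀ hm hmσ
    _ = m⁻¹ * (∑ j, |a j|) * RS := by ring

lemma exists_gap {ι : Type*} [DecidableEq ι] (S : Finset ι) (d : ι → ℝ)
    (i₀ : ι) (hi₀ : i₀ ∈ S) (hd0 : d i₀ = 0) (r : ℝ) (hr : 0 < r) :
    ∃ l : ℕ, l < S.card ∧ ∀ j ∈ S, d j ∉ Set.Ioc ((l : ℝ) * r) ((l : ℝ) * r + r) := by
  by_contra hcon
  push_neg at hcon
  have hcon' : ∀ l : ℕ, ∃ j, j ∈ S ∧ (l < S.card → d j ∈ Set.Ioc ((l : ℝ) * r) ((l : ℝ) * r + r)) := by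
    intro l
    by_cases h : l < S.card
    · obtain ⟨j, hj, hj2⟩ := hcon l h
      exact ⟨j, hj, fun _ => hj2⟩
    · exact ⟨i₀, hi₀, fun hh => absurd hh h⟩
  choose g hgS hgmem using hcon'
  have key : ∀ l ∈ Finset.range S.card, g l ∈ S.erase i₀ := by
    intro l hl
    rw [Finset.mem_range] at hl
    refine Finset.mem_erase.mpr ⟨?_, hgS l⟩
    intro h
    have h1 := (hgmem l hl).1
    rw [h, hd0] at h1
    have : (0:ℝ) ≤ (l:ℝ) * r := mul_nonneg (Nat.cast_nonneg l) hr.le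
    linarith
  have hinj : Set.InjOn g ↑(Finset.range S.card) := by
    intro l hl l' hl' heq
    simp only [Finset.coe_range, Set.mem_Iio] at hl hl'
    by_contra hne
    rcases lt_or_gt_of_ne hne with h | h
    · have h1 := (hgmem l hl).2
      have h2 := (hgmem l' hl').1
      rw [heq] at h1
      have hcast : ((l:ℝ) + 1) ≤ (l':ℝ) := by exact_mod_cast h
      nlinarith
    · have h1 := (hgmem l' hl').2
      have h2 := (hgmem l hl).1
      rw [← heq] at h1
      have hcast : ((l':ℝ) + 1) ≤ (l:ℝ) := by exact_mod_cast h
      nlinarith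
  have hle := Finset.card_le_card_of_injOn g key hinj
  rw [Finset.card_range, Finset.card_erase_of_mem hi₀] at hle
  have hpos : 0 < S.card := Finset.card_pos.mpr ⟨i₀, hi₀⟩
  omega

set_option maxHeartbeats 2000000 in
lemma key_induction (N : ℕ) (a : Fin N → ℝ) (T M m : ℝ) (hT : 0 < T) (hM : 0 ≤ M)
    (hm : 0 < m) (hma : ∀ S : Finset (Fin N), S.Nonempty → m ≤ |∑ i ∈ S, a i|) :
    ∀ k : ℕ, ∃ C : ℝ, 0 ≤ C ∧ ∀ G : ℝ → ℝ, (∀ r : ℝ, 1 ≤ r → |deriv G r| ≤ M) →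
      ∀ x : Fin N → ℝ → Plane, IsVortexSolution N a G T x →
      ∀ S : Finset (Fin N), S.Nonempty → S.card ≤ k →
      ∀ t₀ t' : ℝ, 0 ≤ t₀ → t₀ ≤ t' → t' < T →
      (∀ t ∈ Set.Icc t₀ t', ∀ i ∈ S, ∀ j, j ∉ S → 1 ≤ ‖x i t - x j t‖) →
      ∀ i ∈ S, ‖x i t' - x i t₀‖ ≤ C := by
  intro k
  induction k with
  | zero =>
    refine ⟨0, le_rfl, fun G _ x _ S hS hcard => ?_⟩
    have := Finset.card_pos.mpr hS
    omega
  | succ k ih =>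
    obtain ⟨C', hC'0, hIH⟩ := ih
    set A := ∑ i, |a i| with hA
    have hA0 : 0 ≤ A := Finset.sum_nonneg fun i _ => abs_nonneg _
    set r := 2 * C' + 3 with hrdef
    have hr0 : (0:ℝ) < r := by simp only [hrdef]; linarith
    set R := ((k:ℝ) + 1) * r with hRdef
    have hR0 : 0 ≤ R := by positivity
    set cB := A * (A * M) * T with hcBdef
    have hcB0 : 0 ≤ cB := by positivity
    set D1 := 2 * (A / m * R) + cB / m with hD1def
    have hD10 : 0 ≤ D1 := by positivity
    refine ⟨D1 + C', by linarith, ?_⟩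
    intro G hGM x hx S hS hcard t₀ t' ht₀0 ht₀t' ht'T hsep i hiS
    have hsubI : Set.Icc t₀ t' ⊆ Set.Ico 0 T :=
      fun u hu => ⟨le_trans ht₀0 hu.1, lt_of_le_of_lt hu.2 ht'T⟩
    have hcont : ∀ j : Fin N, ContinuousOn (x j) (Set.Icc t₀ t') :=
      fun j u hu => ((hx.2 j u (hsubI hu)).mono hsubI).continuousWithinAt
    have hcardR : ((S.card : ℝ)) * r ≤ R := by
      have : (S.card : ℝ) ≤ (k:ℝ) + 1 := by exact_mod_cast hcard
      rw [hRdef]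
      exact mul_le_mul_of_nonneg_right this hr0.le
    -- Claim A : as long as all mutual distances within S stay below S.card * r,
    -- the displacement is at most D1.
    have claimA : ∀ s ∈ Set.Icc t₀ t',
        (∀ u ∈ Set.Icc t₀ s, ∀ i' ∈ S, ∀ j' ∈ S, ‖x i' u - x j' u‖ < (S.card : ℝ) * r) →
        ∀ i' ∈ S, ‖x i' s - x i' t₀‖ ≤ D1 := by
      intro s hs hdists i' hi'
      have hmσ := hma S hS
      have hσ0 : (∑ j ∈ S, a j) ≠ 0 := by
        intro h; rw [h] at hmσ; simp at hmσ; linarith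
      have hdrift := center_drift N a G T M hGM x hx S t₀ s ht₀0 hs.1
        (lt_of_le_of_lt hs.2 ht'T)
        (fun u hu => hsep u ⟨hu.1, le_trans hu.2 hs.2⟩)
      have ht₀mem : t₀ ∈ Set.Icc t₀ s := Set.left_mem_Icc.mpr hs.1
      have hsmem : s ∈ Set.Icc t₀ s := Set.right_mem_Icc.mpr hs.1
      have hsp_s := spread_bound a S (fun j => x j s) hi' hm hmσ
        (fun j hj => le_of_lt (hdists s hsmem i' hi' j hj))
      have hsp_0 := spread_bound a S (fun j => x j t₀) hi' hm hmσ
        (fun j hj => le_of_lt (hdists t₀ ht₀mem i' hi' j hj))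
      set σ := ∑ j ∈ S, a j
      have decomp : x i' s - x i' t₀ =
          (x i' s - σ⁻¹ • ∑ j ∈ S, a j • x j s)
          + σ⁻¹ • ((∑ j ∈ S, a j • x j s) - (∑ j ∈ S, a j • x j t₀))
          - (x i' t₀ - σ⁻¹ • ∑ j ∈ S, a j • x j t₀) := by
        rw [smul_sub]; abel
      have hnorm : ‖x i' s - x i' t₀‖ ≤
          ‖x i' s - σ⁻¹ • ∑ j ∈ S, a j • x j s‖
          + ‖σ⁻¹ • ((∑ j ∈ S, a j • x j s) - (∑ j ∈ S, a j • x j t₀))‖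
          + ‖x i' t₀ - σ⁻¹ • ∑ j ∈ S, a j • x j t₀‖ := by
        rw [decomp]
        exact le_trans (norm_sub_le _ _) (by gcongr; exact norm_add_le _ _)
      have hmid : ‖σ⁻¹ • ((∑ j ∈ S, a j • x j s) - (∑ j ∈ S, a j • x j t₀))‖ ≤ cB / m := by
        rw [norm_smul, Real.norm_eq_abs, abs_inv]
        have h1 : ‖(∑ j ∈ S, a j • x j s) - (∑ j ∈ S, a j • x j t₀)‖ ≤ cB := by
          refine le_trans hdrift ?_
          rw [hcBdef]
          have hsT : s - t₀ ≤ T := by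
            have := hs.2; have := ht'T; linarith
          have : 0 ≤ A * (A * M) := by positivity
          nlinarith
        calc |σ|⁻¹ * ‖(∑ j ∈ S, a j • x j s) - (∑ j ∈ S, a j • x j t₀)‖
            ≤ m⁻¹ * cB := by
              refine mul_le_mul ?_ h1 (norm_nonneg _) (by positivity)
              exact inv_anti₀ hm hmσ
          _ = cB / m := by rw [div_eq_inv_mul]
      have hsp_s' : ‖x i' s - σ⁻¹ • ∑ j ∈ S, a j • x j s‖ ≤ A / m * R := by
        refine le_trans hsp_s ?_
        have hAm : 0 ≤ A / m := by positivity
        calc (∑ j, |a j|) / m * ((S.card:ℝ) * r) = A / m * ((S.card:ℝ)*r) := by rw [hA]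
          _ ≤ A / m * R := mul_le_mul_of_nonneg_left hcardR hAm
      have hsp_0' : ‖x i' t₀ - σ⁻¹ • ∑ j ∈ S, a j • x j t₀‖ ≤ A / m * R := by
        refine le_trans hsp_0 ?_
        have hAm : 0 ≤ A / m := by positivity
        calc (∑ j, |a j|) / m * ((S.card:ℝ) * r) = A / m * ((S.card:ℝ)*r) := by rw [hA]
          _ ≤ A / m * R := mul_le_mul_of_nonneg_left hcardR hAm
      rw [hD1def]
      linarith
    -- the set of times where the cluster S has spread at least S.card * r
    set E : Set ℝ := {u | u ∈ Set.Icc t₀ t' ∧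
      ∃ i' ∈ S, ∃ j' ∈ S, (S.card : ℝ) * r ≤ ‖x i' u - x j' u‖} with hEdef
    have hEc : IsClosed E := by
      have hEeq : E = ⋃ i' ∈ S, ⋃ j' ∈ S,
          (Set.Icc t₀ t' ∩ (fun u => ‖x i' u - x j' u‖) ⁻¹' Set.Ici ((S.card:ℝ)*r)) := by
        ext u
        simp only [hEdef, Set.mem_setOf_eq, Set.mem_iUnion, Set.mem_inter_iff,
          Set.mem_preimage, Set.mem_Ici, exists_prop]
        constructor
        · rintro ⟨hu, i', hi', j', hj', hge⟩
          exact ⟨i', hi', j', hj', hu, hge⟩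
        · rintro ⟨i', hi', j', hj', hu, hge⟩
          exact ⟨hu, i', hi', j', hj', hge⟩
      rw [hEeq]
      refine isClosed_biUnion_finset fun i' _ => isClosed_biUnion_finset fun j' _ => ?_
      exact ContinuousOn.preimage_isClosed_of_isClosed
        (((hcont i').sub (hcont j')).norm) isClosed_Icc isClosed_Ici
    by_cases hE : E = ∅
    · -- spread stays below S.card * r for the whole time: direct bound
      have hlt : ∀ u ∈ Set.Icc t₀ t', ∀ i' ∈ S, ∀ j' ∈ S,
          ‖x i' u - x j' u‖ < (S.card : ℝ) * r := by
        intro u hu i' hi' j' hj'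
        by_contra hcon
        push_neg at hcon
        have : u ∈ E := ⟨hu, i', hi', j', hj', hcon⟩
        rw [hE] at this
        exact this
      have := claimA t' (Set.right_mem_Icc.mpr ht₀t') (fun u hu => hlt u hu) i hiS
      linarith
    · -- first time t₁ where the spread reaches S.card * r
      have hEne : E.Nonempty := Set.nonempty_iff_ne_empty.mpr hE
      have hEbdd : BddBelow E := ⟨t₀, fun u hu => hu.1.1⟩
      set t₁ := sInf E with ht₁def
      have ht₁E : t₁ ∈ E := hEc.csInf_mem hEne hEbdd
      have ht₁mem : t₁ ∈ Set.Icc t₀ t' := ht₁E.1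
      have hbefore : ∀ u ∈ Set.Ico t₀ t₁, ∀ i' ∈ S, ∀ j' ∈ S,
          ‖x i' u - x j' u‖ < (S.card : ℝ) * r := by
        intro u hu i' hi' j' hj'
        by_contra hcon
        push_neg at hcon
        have huE : u ∈ E := ⟨⟨hu.1, le_trans hu.2.le ht₁mem.2⟩, i', hi', j', hj', hcon⟩
        exact absurd (csInf_le hEbdd huE) (not_le.mpr hu.2)
      -- displacement up to time t₁ is at most D1
      have stepB : ∀ i' ∈ S, ‖x i' t₁ - x i' t₀‖ ≤ D1 := by
        intro i' hi'
        rcases eq_or_lt_of_le ht₁mem.1 with heq | hlt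
        · rw [← heq]; simpa using hD10
        · have hcw : ContinuousWithinAt (fun u => ‖x i' u - x i' t₀‖)
              (Set.Ico t₀ t₁) t₁ := by
            have h1 : ContinuousOn (fun u => ‖x i' u - x i' t₀‖) (Set.Icc t₀ t') :=
              ((hcont i').sub continuousOn_const).norm
            exact (h1 t₁ ht₁mem).mono
              (fun v hv => ⟨hv.1, le_trans hv.2.le ht₁mem.2⟩)
          haveI := right_nhdsWithin_Ico_neBot hlt
          refine le_of_tendsto hcw ?_
          filter_upwards [self_mem_nhdsWithin] with u hu
          exact claimA u ⟨hu.1, le_trans hu.2.le ht₁mem.2⟩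
            (fun v hv i'' hi'' j'' hj'' =>
              hbefore v ⟨hv.1, lt_of_le_of_lt hv.2 hu.2⟩ i'' hi'' j'' hj'') i' hi'
      -- split S into two groups separated by more than r at time t₁
      obtain ⟨i₀, hi₀S, j₀, hj₀S, hfar⟩ := ht₁E.2
      obtain ⟨l, hlk, hgap⟩ := exists_gap S (fun j => ‖x j t₁ - x i₀ t₁‖) i₀ hi₀S
        (by simp) r hr0
      set P := S.filter (fun j => ‖x j t₁ - x i₀ t₁‖ ≤ (l:ℝ)*r) with hPdef
      have hi₀P : i₀ ∈ P := by
        rw [hPdef, Finset.mem_filter]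
        exact ⟨hi₀S, by simp only [sub_self, norm_zero]; positivity⟩
      have hj₀P : j₀ ∉ P := by
        intro h
        have h2 := (Finset.mem_filter.mp h).2
        have hrev : ‖x j₀ t₁ - x i₀ t₁‖ = ‖x i₀ t₁ - x j₀ t₁‖ := norm_sub_rev _ _
        have hcast : (l:ℝ) + 1 ≤ (S.card:ℝ) := by exact_mod_cast hlk
        have hmul : ((l:ℝ)+1)*r ≤ (S.card:ℝ)*r := mul_le_mul_of_nonneg_right hcast hr0.le
        rw [hrev] at h2
        linarith
      have hPS : P ⊆ S := Finset.filter_subset _ _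
      have hQne : (S \ P).Nonempty := ⟨j₀, Finset.mem_sdiff.mpr ⟨hj₀S, hj₀P⟩⟩
      have hPcard : P.card ≤ k := by
        have : P ⊂ S := ⟨hPS, fun h => hj₀P (h hj₀S)⟩
        have := Finset.card_lt_card this
        omega
      have hQS : (S \ P) ⊆ S := Finset.sdiff_subset
      have hQcard : (S \ P).card ≤ k := by
        have : (S \ P) ⊂ S := ⟨hQS, fun h => (Finset.mem_sdiff.mp (h hi₀S)).2 hi₀P⟩
        have := Finset.card_lt_card this
        omega
      have hcross1 : ∀ p ∈ P, ∀ q ∈ S \ P, r < ‖x p t₁ - x q t₁‖ := by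
        intro p hp q hq
        have hdp := (Finset.mem_filter.mp hp).2
        obtain ⟨hqS, hqP⟩ := Finset.mem_sdiff.mp hq
        have hdq : ¬ (‖x q t₁ - x i₀ t₁‖ ≤ (l:ℝ)*r) := by
          intro h
          exact hqP (Finset.mem_filter.mpr ⟨hqS, h⟩)
        push_neg at hdq
        have hgapq := hgap q hqS
        rw [Set.mem_Ioc] at hgapq
        push_neg at hgapq
        have hdq2 : (l:ℝ)*r + r < ‖x q t₁ - x i₀ t₁‖ := hgapq hdq
        have htri : ‖x q t₁ - x i₀ t₁‖ ≤ ‖x q t₁ - x p t₁‖ + ‖x p t₁ - x i₀ t₁‖ := by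
          have e : x q t₁ - x i₀ t₁ = (x q t₁ - x p t₁) + (x p t₁ - x i₀ t₁) := by abel
          rw [e]; exact norm_add_le _ _
        have hrev : ‖x q t₁ - x p t₁‖ = ‖x p t₁ - x q t₁‖ := norm_sub_rev _ _
        linarith
      -- the groups P and S \ P stay at distance > 1 after t₁
      set Q := S \ P with hQdef
      set E₂ : Set ℝ := {u | u ∈ Set.Icc t₁ t' ∧
        ∃ p ∈ P, ∃ q ∈ Q, ‖x p u - x q u‖ ≤ 1} with hE₂def
      have hE₂c : IsClosed E₂ := by
        have hEeq : E₂ = ⋃ p ∈ P, ⋃ q ∈ Q,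
            (Set.Icc t₁ t' ∩ (fun u => ‖x p u - x q u‖) ⁻¹' Set.Iic (1:ℝ)) := by
          ext u
          simp only [hE₂def, Set.mem_setOf_eq, Set.mem_iUnion, Set.mem_inter_iff,
            Set.mem_preimage, Set.mem_Iic, exists_prop]
          constructor
          · rintro ⟨hu, p, hp, q, hq, hge⟩
            exact ⟨p, hp, q, hq, hu, hge⟩
          · rintro ⟨p, hp, q, hq, hu, hge⟩
            exact ⟨hu, p, hp, q, hq, hge⟩
        rw [hEeq]
        refine isClosed_biUnion_finset fun p _ => isClosed_biUnion_finset fun q _ => ?_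
        have hsub : Set.Icc t₁ t' ⊆ Set.Icc t₀ t' :=
          Set.Icc_subset_Icc_left ht₁mem.1
        exact ContinuousOn.preimage_isClosed_of_isClosed
          ((((hcont p).mono hsub).sub ((hcont q).mono hsub)).norm) isClosed_Icc isClosed_Iic
      have hE₂empty : E₂ = ∅ := by
        by_contra hne₂
        have hE₂ne : E₂.Nonempty := Set.nonempty_iff_ne_empty.mpr hne₂
        have hE₂bdd : BddBelow E₂ := ⟨t₁, fun u hu => hu.1.1⟩
        set t₂ := sInf E₂ with ht₂def
        have ht₂E : t₂ ∈ E₂ := hE₂c.csInf_mem hE₂ne hE₂bdd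
        have ht₂mem : t₂ ∈ Set.Icc t₁ t' := ht₂E.1
        have ht₁t₂ : t₁ < t₂ := by
          rcases eq_or_lt_of_le ht₂mem.1 with heq | hlt
          · exfalso
            obtain ⟨p, hp, q, hq, hle1⟩ := ht₂E.2
            have := hcross1 p hp q hq
            rw [← heq] at hle1
            rw [hrdef] at this
            linarith
          · exact hlt
        have hmid : ∀ u ∈ Set.Ico t₁ t₂, ∀ p ∈ P, ∀ q ∈ Q, 1 < ‖x p u - x q u‖ := by
          intro u hu p hp q hq
          by_contra hcon
          push_neg at hcon
          have huE : u ∈ E₂ := ⟨⟨hu.1, le_trans hu.2.le ht₂mem.2⟩, p, hp, q, hq, hcon⟩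
          exact absurd (csInf_le hE₂bdd huE) (not_le.mpr hu.2)
        have hat₂ : ∀ p ∈ P, ∀ q ∈ Q, 1 ≤ ‖x p t₂ - x q t₂‖ := by
          intro p hp q hq
          have hcw : ContinuousWithinAt (fun u => ‖x p u - x q u‖) (Set.Ico t₁ t₂) t₂ := by
            have h1 : ContinuousOn (fun u => ‖x p u - x q u‖) (Set.Icc t₀ t') :=
              ((hcont p).sub (hcont q)).norm
            refine (h1 t₂ ⟨le_trans ht₁mem.1 ht₂mem.1, ht₂mem.2⟩).mono ?_
            intro v hv
            exact ⟨le_trans ht₁mem.1 hv.1, le_trans hv.2.le ht₂mem.2⟩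
          haveI := right_nhdsWithin_Ico_neBot ht₁t₂
          refine ge_of_tendsto hcw ?_
          filter_upwards [self_mem_nhdsWithin] with u hu
          exact (hmid u hu p hp q hq).le
        -- separation hypotheses for the two groups on [t₁, t₂]
        have hsepcross : ∀ t ∈ Set.Icc t₁ t₂, ∀ p ∈ P, ∀ q ∈ Q, 1 ≤ ‖x p t - x q t‖ := by
          intro t ht p hp q hq
          rcases eq_or_lt_of_le ht.2 with heq | hlt
          · rw [heq]; exact hat₂ p hp q hq
          · exact (hmid t ⟨ht.1, hlt⟩ p hp q hq).le
        have hsub₂ : Set.Icc t₁ t₂ ⊆ Set.Icc t₀ t' := fun v hv =>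
          ⟨le_trans ht₁mem.1 hv.1, le_trans hv.2 ht₂mem.2⟩
        have hsepP : ∀ t ∈ Set.Icc t₁ t₂, ∀ p ∈ P, ∀ j, j ∉ P → 1 ≤ ‖x p t - x j t‖ := by
          intro t ht p hp j hj
          by_cases hjS : j ∈ S
          · exact hsepcross t ht p hp j (Finset.mem_sdiff.mpr ⟨hjS, hj⟩)
          · exact hsep t (hsub₂ ht) p (hPS hp) j hjS
        have hsepQ : ∀ t ∈ Set.Icc t₁ t₂, ∀ q ∈ Q, ∀ j, j ∉ Q → 1 ≤ ‖x q t - x j t‖ := by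
          intro t ht q hq j hj
          by_cases hjS : j ∈ S
          · have hjP : j ∈ P := by
              by_contra hjP
              exact hj (Finset.mem_sdiff.mpr ⟨hjS, hjP⟩)
            rw [norm_sub_rev]
            exact hsepcross t ht j hjP q hq
          · exact hsep t (hsub₂ ht) q (hQS hq) j hjS
        have h0t₁ : 0 ≤ t₁ := le_trans ht₀0 ht₁mem.1
        have ht₂T : t₂ < T := lt_of_le_of_lt ht₂mem.2 ht'T
        have hbP := hIH G hGM x hx P ⟨i₀, hi₀P⟩ hPcard t₁ t₂ h0t₁ ht₂mem.1 ht₂T hsepP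
        have hbQ := hIH G hGM x hx Q hQne hQcard t₁ t₂ h0t₁ ht₂mem.1 ht₂T hsepQ
        obtain ⟨p, hp, q, hq, hle1⟩ := ht₂E.2
        have h1 := hbP p hp
        have h2 := hbQ q hq
        have h3 := hcross1 p hp q hq
        have htri : ‖x p t₁ - x q t₁‖ ≤
            ‖x p t₂ - x q t₂‖ + ‖x p t₂ - x p t₁‖ + ‖x q t₂ - x q t₁‖ := by
          have e : x p t₁ - x q t₁ =
              ((x p t₂ - x q t₂) - (x p t₂ - x p t₁)) + (x q t₂ - x q t₁) := by abel
          rw [e]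
          refine le_trans (norm_add_le _ _) ?_
          have := norm_sub_le (x p t₂ - x q t₂) (x p t₂ - x p t₁)
          linarith
        rw [hrdef] at h3
        linarith
      -- with the groups separated, apply the induction hypothesis on [t₁, t']
      have hsepfin : ∀ t ∈ Set.Icc t₁ t', ∀ p ∈ P, ∀ q ∈ Q, 1 ≤ ‖x p t - x q t‖ := by
        intro t ht p hp q hq
        by_contra hcon
        push_neg at hcon
        have : t ∈ E₂ := ⟨ht, p, hp, q, hq, hcon.le⟩
        rw [hE₂empty] at this
        exact this
      have hsub₃ : Set.Icc t₁ t' ⊆ Set.Icc t₀ t' := Set.Icc_subset_Icc_left ht₁mem.1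
      have hsepP' : ∀ t ∈ Set.Icc t₁ t', ∀ p ∈ P, ∀ j, j ∉ P → 1 ≤ ‖x p t - x j t‖ := by
        intro t ht p hp j hj
        by_cases hjS : j ∈ S
        · exact hsepfin t ht p hp j (Finset.mem_sdiff.mpr ⟨hjS, hj⟩)
        · exact hsep t (hsub₃ ht) p (hPS hp) j hjS
      have hsepQ' : ∀ t ∈ Set.Icc t₁ t', ∀ q ∈ Q, ∀ j, j ∉ Q → 1 ≤ ‖x q t - x j t‖ := by
        intro t ht q hq j hj
        by_cases hjS : j ∈ S
        · have hjP : j ∈ P := by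
            by_contra hjP
            exact hj (Finset.mem_sdiff.mpr ⟨hjS, hjP⟩)
          rw [norm_sub_rev]
          exact hsepfin t ht j hjP q hq
        · exact hsep t (hsub₃ ht) q (hQS hq) j hjS
      have h0t₁ : 0 ≤ t₁ := le_trans ht₀0 ht₁mem.1
      have hbP := hIH G hGM x hx P ⟨i₀, hi₀P⟩ hPcard t₁ t' h0t₁ ht₁mem.2 ht'T hsepP'
      have hbQ := hIH G hGM x hx Q hQne hQcard t₁ t' h0t₁ ht₁mem.2 ht'T hsepQ'
      have hstep2 : ‖x i t' - x i t₁‖ ≤ C' := by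
        by_cases hiP : i ∈ P
        · exact hbP i hiP
        · exact hbQ i (Finset.mem_sdiff.mpr ⟨hiS, hiP⟩)
      have hstep1 := stepB i hiS
      have e : x i t' - x i t₀ = (x i t' - x i t₁) + (x i t₁ - x i t₀) := by abel
      calc ‖x i t' - x i t₀‖ ≤ ‖x i t' - x i t₁‖ + ‖x i t₁ - x i t₀‖ := by
            rw [e]; exact norm_add_le _ _
        _ ≤ D1 + C' := by linarith
/-- Uniform bound on the trajectories under the non-neutral cluster hypothesis:
the constant `C` depends only on `N`, the intensities, `T` and the bound `M` on
`sup_{r≥1} |G'(r)|`; it depends neither on the initial positions nor on the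
singularity of `G` near `0`. -/
theorem uniform_bound_on_trajectories
    (N : ℕ) (hN : 1 ≤ N) (a : Fin N → ℝ) (ha : ∀ i, a i ≠ 0)
    (hcluster : ∀ P : Finset (Fin N), P.Nonempty → ∑ i ∈ P, a i ≠ 0)
    (T : ℝ) (hT : 0 < T) (M : ℝ) (hM : 0 ≤ M) :
    ∃ C > (0 : ℝ), ∀ G : ℝ → ℝ, KernelRegular G →
      (∀ r : ℝ, 1 ≤ r → |deriv G r| ≤ M) →
      ∀ x : Fin N → ℝ → Plane, IsVortexSolution N a G T x →
        ∀ t ∈ Set.Ico (0 : ℝ) T, ∀ i : Fin N, ‖x i t - x i 0‖ ≤ C := by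
  haveI : Nonempty (Fin N) := Fin.pos_iff_nonempty.mp (by omega)
  set Ps := (Finset.univ : Finset (Finset (Fin N))).filter (fun P => P.Nonempty) with hPsdef
  have hPsne : Ps.Nonempty :=
    ⟨Finset.univ, Finset.mem_filter.mpr ⟨Finset.mem_univ _, Finset.univ_nonempty⟩⟩
  set m := Ps.inf' hPsne (fun P => |∑ i ∈ P, a i|) with hmdef
  have hm : 0 < m := by
    rw [hmdef, Finset.lt_inf'_iff]
    intro P hP
    exact abs_pos.mpr (hcluster P (Finset.mem_filter.mp hP).2)
  have hma : ∀ S : Finset (Fin N), S.Nonempty → m ≤ |∑ i ∈ S, a i| := by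
    intro S hS
    exact Finset.inf'_le _ (Finset.mem_filter.mpr ⟨Finset.mem_univ _, hS⟩)
  obtain ⟨C, hC0, hC⟩ := key_induction N a T M m hT hM hm hma N
  refine ⟨C + 1, by linarith, ?_⟩
  intro G _ hGM x hx t ht i
  have hcard : (Finset.univ : Finset (Fin N)).card ≤ N := by
    simp [Finset.card_univ]
  have := hC G hGM x hx Finset.univ Finset.univ_nonempty hcard 0 t le_rfl ht.1 ht.2
    (fun t' _ i' _ j hj => absurd (Finset.mem_univ j) hj) i (Finset.mem_univ i)
  linarith
end
end
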